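/- Let R be a ring. Then R is an exchange UJ# ring whose Jacobson radical J(R) is nil if and only if R is strongly nil-clean, i.e., for every a ∈ R there exist an idempotent e and a nilpotent q with a = e + q and e q = q e. -/

import Mathlib

open Polynomial

namespace UJsharpAux


variable {R : Type*} [Ring R]

/-- If `a - a²` is nilpotent, then `a` decomposes as commuting idempotent + nilpotent,
with the idempotent in `Ra` and its complement in `R(1-a)`. -/
theorem key_split (a : R) (h : IsNilpotent (a - a ^ 2)) :
    ∃ e q : R, IsIdempotentElem e ∧ e ∈ Ideal.span {a} ∧ 1 - e ∈ Ideal.span {1 - a} ∧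
      IsNilpotent q ∧ a = e + q ∧ e * q = q * e := by
  obtain ⟨m, hm⟩ := h
  rcases Nat.eq_zero_or_pos m with hm0 | hmpos
  · subst hm0
    have h10 : (1 : R) = 0 := by simpa using hm
    have hall : ∀ x : R, x = 0 := fun x => by
      calc x = x * 1 := (mul_one x).symm
      _ = x * 0 := by rw [h10]
      _ = 0 := mul_zero x
    refine ⟨0, 0, ?_, Submodule.zero_mem _, ?_, ⟨1, by simp⟩, ?_, by simp⟩
    · simp [IsIdempotentElem]
    · rw [hall (1 - (0:R))]; exact Submodule.zero_mem _
    · rw [hall a]; simp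
  -- main case
  set φ := Polynomial.aeval (R := ℤ) a with hφ
  have hcomm : ∀ p q : ℤ[X], φ p * φ q = φ q * φ p := by
    intro p q; rw [← map_mul, ← map_mul, mul_comm]
  set E : ℤ[X] := ∑ k ∈ Finset.Ico m (2*m+1), X ^ k * (1 - X) ^ (2*m - k) * ((2*m).choose k : ℤ[X])
    with hE
  set F : ℤ[X] := ∑ k ∈ Finset.range m, X ^ k * (1 - X) ^ (2*m - k) * ((2*m).choose k : ℤ[X])
    with hF
  have hEF : F + E = 1 := by
    have hb := add_pow (X : ℤ[X]) (1 - X) (2*m)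
    have hone : (X + (1 - X) : ℤ[X]) = 1 := by ring
    rw [hone, one_pow] at hb
    rw [hF, hE, Finset.range_eq_Ico,
      Finset.sum_Ico_consecutive _ (Nat.zero_le m) (by omega), ← Finset.range_eq_Ico, ← hb]
  have hXE : X ^ m ∣ E := by
    apply Finset.dvd_sum
    intro k hk
    have hk1 : m ≤ k := (Finset.mem_Ico.1 hk).1
    exact dvd_mul_of_dvd_left (dvd_mul_of_dvd_left (pow_dvd_pow X hk1) _) _
  have hXF : (1 - X) ^ m ∣ F := by
    apply Finset.dvd_sum
    intro k hk
    have hk1 : k < m := Finset.mem_range.1 hk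
    exact dvd_mul_of_dvd_left (dvd_mul_of_dvd_right (pow_dvd_pow (1 - X) (by omega)) _) _
  have hzfac : (X - X ^ 2 : ℤ[X]) = X * (1 - X) := by ring
  have hEidem : (X - X ^ 2 : ℤ[X]) ^ m ∣ E - E ^ 2 := by
    have : E - E ^ 2 = E * F := by
      have hF1 : F = 1 - E := by rw [← hEF]; ring
      rw [hF1]; ring
    rw [this, hzfac, mul_pow]
    exact mul_dvd_mul hXE hXF
  -- evaluations
  have hE0 : E.eval 0 = 0 := by
    rw [hE, eval_finset_sum]
    apply Finset.sum_eq_zero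
    intro k hk
    have hk1 : m ≤ k := (Finset.mem_Ico.1 hk).1
    have hkne : k ≠ 0 := by omega
    simp [eval_mul, eval_pow, zero_pow hkne]
  have hE1 : E.eval 1 = 1 := by
    rw [hE, eval_finset_sum]
    rw [Finset.sum_eq_single_of_mem (2*m) (by simp [Finset.mem_Ico]; omega)]
    · simp
    · intro k hk hkne
      have hk1 : k ≤ 2*m := by have := (Finset.mem_Ico.1 hk).2; omega
      have : 2*m - k ≠ 0 := by omega
      simp [eval_mul, eval_pow, zero_pow this]
  have hdvd : (X - X ^ 2 : ℤ[X]) ∣ X - E := by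
    have h0 : (X - E).eval 0 = 0 := by simp [hE0]
    obtain ⟨p₁, hp₁⟩ : (X : ℤ[X]) ∣ X - E := by
      rw [X_dvd_iff, coeff_zero_eq_eval_zero, h0]
    have h1 : p₁.eval 1 = 0 := by
      have := congrArg (Polynomial.eval (1:ℤ)) hp₁
      simp [hE1] at this
      exact this.symm
    obtain ⟨p₂, hp₂⟩ : (X - C (1:ℤ)) ∣ p₁ := dvd_iff_isRoot.2 h1
    refine ⟨-p₂, ?_⟩
    rw [hp₁, hp₂, C_1]
    ring
  -- now push through φ
  have haX : φ X = a := aeval_X a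
  have hz : φ (X - X ^ 2) = a - a ^ 2 := by
    rw [map_sub, map_pow, haX]
  set e : R := φ E with he
  set q : R := a - e with hq
  have hidem : IsIdempotentElem e := by
    obtain ⟨G, hG⟩ := hEidem
    have := congrArg φ hG
    rw [map_sub, map_pow, map_mul, map_pow, hz, hm, zero_mul] at this
    have h3 : e = e ^ 2 := sub_eq_zero.1 this
    show e * e = e
    rw [← pow_two, ← h3]
  have hmem1 : e ∈ Ideal.span ({a} : Set R) := by
    obtain ⟨E₁, hE₁⟩ : (X : ℤ[X]) ∣ E := dvd_trans (dvd_pow_self X (by omega)) hXE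
    refine Submodule.mem_span_singleton.mpr ⟨φ E₁, ?_⟩
    rw [smul_eq_mul, ← haX, ← map_mul, ← mul_comm X E₁, ← hE₁]
  have hmem2 : 1 - e ∈ Ideal.span ({1 - a} : Set R) := by
    obtain ⟨F₁, hF₁⟩ : (1 - X : ℤ[X]) ∣ F := dvd_trans (dvd_pow_self _ (by omega)) hXF
    refine Submodule.mem_span_singleton.mpr ⟨φ F₁, ?_⟩
    have hFE : (1 : ℤ[X]) - E = F := by rw [← hEF]; ring
    have : φ (1 - E) = 1 - e := by rw [map_sub, map_one]
    rw [smul_eq_mul, ← this, hFE, hF₁, mul_comm (1 - X) F₁, map_mul, map_sub, map_one, haX]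
  have hqnil : IsNilpotent q := by
    obtain ⟨H, hH⟩ := hdvd
    have := congrArg φ hH
    rw [map_sub, haX, map_mul, hz] at this
    rw [hq, this]
    refine ⟨m, ?_⟩
    rw [Commute.mul_pow, hm, zero_mul]
    show (a - a^2) * φ H = φ H * (a - a^2)
    rw [← hz, hcomm]
  refine ⟨e, q, hidem, hmem1, hmem2, hqnil, by rw [hq]; abel, ?_⟩
  rw [hq]
  have : e * a = a * e := by rw [← haX, he, hcomm]
  calc e * (a - e) = e * a - e * e := by noncomm_ring
  _ = a * e - e * e := by rw [this]
  _ = (a - e) * e := by noncomm_ring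


variable {R : Type*} [Ring R]

lemma exists_left_inv_one_sub {x : R} (hx : x ∈ Ideal.jacobson (⊥ : Ideal R)) :
    ∃ z : R, z * (1 - x) = 1 := by
  obtain ⟨z, hz⟩ := Ideal.mem_jacobson_iff.1 hx (-1)
  refine ⟨z, ?_⟩
  have hz' : z * -1 * x + z - 1 = 0 := by simpa using hz
  have hre : z * (1 - x) = z * -1 * x + z := by noncomm_ring
  rw [hre, ← sub_eq_zero]
  exact hz'

lemma isUnit_one_sub_of_mem_jacobson {x : R} (hx : x ∈ Ideal.jacobson (⊥ : Ideal R)) :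
    IsUnit (1 - x) := by
  obtain ⟨z, hz⟩ := exists_left_inv_one_sub hx
  have h1 : (1 : R) - z ∈ Ideal.jacobson (⊥ : Ideal R) := by
    have hzx : z * x ∈ Ideal.jacobson (⊥ : Ideal R) := Ideal.mul_mem_left _ z hx
    have : (1 : R) - z = -(z * x) := by
      have : z - z * x = 1 := by rw [← hz]; noncomm_ring
      linear_combination (norm := noncomm_ring) -this
    rw [this]
    exact Submodule.neg_mem _ hzx
  obtain ⟨w, hw⟩ := exists_left_inv_one_sub h1
  have hw2 : w * z = 1 := by
    have : (1 : R) - (1 - z) = z := by noncomm_ring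
    rwa [this] at hw
  have hwval : w = 1 - x := by
    calc w = w * (z * (1 - x)) := by rw [hz, mul_one]
    _ = w * z * (1 - x) := by rw [mul_assoc]
    _ = 1 - x := by rw [hw2, one_mul]
  exact ⟨⟨1 - x, z, by rw [← hwval]; exact hw2, hz⟩, rfl⟩

lemma nilpotent_eq_zero {T : Type*} [Ring T] (hred : ∀ t : T, t * t = 0 → t = 0) :
    ∀ t : T, IsNilpotent t → t = 0 := by
  have key : ∀ n : ℕ, ∀ t : T, t ^ n = 0 → t = 0 := by
    intro n
    induction n using Nat.strong_induction_on with
    | _ n ih =>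
      intro t ht
      match n, ht with
      | 0, ht => 
        have h10 : (1 : T) = 0 := by simpa using ht
        calc t = t * 1 := (mul_one t).symm
        _ = t * 0 := by rw [h10]
        _ = 0 := mul_zero t
      | 1, ht => simpa using ht
      | (n+2), ht =>
        have h1 : t ^ (n + 1) * t ^ (n + 1) = 0 := by
          have : t ^ (n + 1) * t ^ (n + 1) = t ^ (n + 2) * t ^ n := by
            rw [← pow_add, ← pow_add]; ring_nf
          rw [this, ht, zero_mul]
        have h2 : t ^ (n + 1) = 0 := hred _ h1
        exact ih (n + 1) (by omega) t h2
  rintro t ⟨n, hn⟩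
  exact key n t hn

lemma idem_central {T : Type*} [Ring T] (hred : ∀ t : T, t * t = 0 → t = 0)
    {e : T} (he : e * e = e) (r : T) : e * r = r * e := by
  have h1 : e * r - e * r * e = 0 := by
    apply hred
    have expand : (e * r - e * r * e) * (e * r - e * r * e)
        = e * r * ((1 - e) * e) * r * (1 - e) := by noncomm_ring
    have : ((1 : T) - e) * e = 0 := by
      have : (1 - e) * e = e - e * e := by noncomm_ring
      rw [this, he, sub_self]
    rw [expand, this]
    noncomm_ring
  have h2 : r * e - e * r * e = 0 := by
    apply hred
    have expand : (r * e - e * r * e) * (r * e - e * r * e)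
        = r * (e * (1 - e)) * r * e - e * r * (e * (1 - e)) * r * e := by noncomm_ring
    have : e * ((1 : T) - e) = 0 := by
      have : e * (1 - e) = e - e * e := by noncomm_ring
      rw [this, he, sub_self]
    rw [expand, this]
    noncomm_ring
  have ha := sub_eq_zero.1 h1
  have hb := sub_eq_zero.1 h2
  rw [ha, hb]


lemma rea {T : Type*} [Ring T] {a b c : T} (h : a * b = c) (t : T) :
    a * (b * t) = c * t := by rw [← mul_assoc, h]

lemma idem_eq_of_eq_mul {T : Type*} [Ring T] (hred : ∀ t : T, t * t = 0 → t = 0)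
    (htriv : ∀ t : T, IsUnit t → t = 1)
    {eps b x : T} (he : eps * eps = eps) (hxb : eps = x * b) : eps * b * eps = eps := by
  have hbx : x * b = eps := hxb.symm
  have hcenb : eps * b = b * eps := idem_central hred he b
  set p : T := eps * (b * eps) with hp
  set c : T := eps * (x * eps) with hc
  have hep : eps * p = p := by rw [hp, rea he]
  have hpe : p * eps = p := by rw [hp]; simp only [mul_assoc, he]
  have hce : c * eps = c := by rw [hc]; simp only [mul_assoc, he]
  have hec : eps * c = c := by rw [hc, rea he]
  have hcp : c * p = eps := by
    rw [hc, hp]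
    simp only [mul_assoc, rea he, rea hcenb, rea hbx, he, hbx]
  set g : T := p * c with hg
  have hgg : g * g = g := by
    rw [hg]; simp only [mul_assoc, rea hcp, hec]
  have hge : g * eps = g := by rw [hg]; simp only [mul_assoc, hce]
  have heg : eps * g = g := by rw [hg, rea hep]
  have hgp : g * p = p := by rw [hg]; simp only [mul_assoc, hcp, hpe]
  set h : T := eps - g with hh
  have hhp : h * p = 0 := by
    rw [hh, sub_mul, hep, hgp, sub_self]
  have hhh : h * h = h := by
    rw [hh]
    calc (eps - g) * (eps - g) = eps * eps - eps * g - g * eps + g * g := by noncomm_ring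
    _ = eps - g := by rw [he, heg, hge, hgg]; abel
  have hhc : h * c = c * h := idem_central hred hhh c
  have hzero : h = 0 := by
    have h1 : h * eps = h := by rw [hh, sub_mul, he, hge]
    calc h = h * eps := h1.symm
    _ = h * (c * p) := by rw [hcp]
    _ = c * h * p := by rw [← mul_assoc, hhc]
    _ = c * (h * p) := by rw [mul_assoc]
    _ = 0 := by rw [hhp, mul_zero]
  have hpeps : p = eps := by
    have : eps - g = 0 := hzero
    have hge2 : eps = g := by rw [← sub_eq_zero]; exact this
    -- now show p = eps using unit triviality
    have hv : (p + (1 - eps)) * (c + (1 - eps)) = 1 := by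
      have e1 : p * (1 - eps) = 0 := by rw [mul_sub, mul_one, hpe, sub_self]
      have e2 : (1 - eps) * c = 0 := by rw [sub_mul, one_mul, hec, sub_self]
      have e3 : ((1:T) - eps) * (1 - eps) = 1 - eps := by
        calc (1-eps) * ((1:T)-eps) = 1 - eps - eps + eps * eps := by noncomm_ring
        _ = 1 - eps := by rw [he]; abel
      calc (p + (1 - eps)) * (c + (1 - eps))
          = p * c + p * (1 - eps) + (1 - eps) * c + (1 - eps) * (1 - eps) := by noncomm_ring
      _ = g + 0 + 0 + (1 - eps) := by rw [← hg, e1, e2, e3]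
      _ = 1 := by rw [← hge2]; abel
    have hv' : (c + (1 - eps)) * (p + (1 - eps)) = 1 := by
      have e1 : c * (1 - eps) = 0 := by rw [mul_sub, mul_one, hce, sub_self]
      have e2 : (1 - eps) * p = 0 := by rw [sub_mul, one_mul, hep, sub_self]
      have e3 : ((1:T) - eps) * (1 - eps) = 1 - eps := by
        calc (1-eps) * ((1:T)-eps) = 1 - eps - eps + eps * eps := by noncomm_ring
        _ = 1 - eps := by rw [he]; abel
      calc (c + (1 - eps)) * (p + (1 - eps))
          = c * p + c * (1 - eps) + (1 - eps) * p + (1 - eps) * (1 - eps) := by noncomm_ring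
      _ = eps + 0 + 0 + (1 - eps) := by rw [hcp, e1, e2, e3]
      _ = 1 := by abel
    have hu : IsUnit (p + (1 - eps)) := ⟨⟨p + (1 - eps), c + (1 - eps), hv, hv'⟩, rfl⟩
    have := htriv _ hu
    have : p + (1 - eps) - (1 - eps) = 1 - (1 - eps) := by rw [this]
    simpa using this
  rw [← mul_assoc] at hp
  rw [← hp, hpeps]

lemma idem_pow_eq {T : Type*} [Monoid T] {g : T} (hgg : g * g = g) :
    ∀ n : ℕ, 0 < n → g ^ n = g := by
  intro n hn
  induction n with
  | zero => omega
  | succ k ih =>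
    rcases Nat.eq_zero_or_pos k with hk | hk
    · subst hk; simp
    · rw [pow_succ, ih hk, hgg]

lemma sq_zero_left_inv {T : Type*} [Ring T]
    (hex : ∀ a : T, ∃ e x z : T, e * e = e ∧ e = x * a ∧ 1 - e = z * (1 - a))
    (hnu : ∀ t : T, IsUnit t → IsNilpotent (t - 1))
    (q c : T) (hq : q * q = 0) : ∃ z, z * (1 + c * q) = 1 := by
  by_contra hno
  push_neg at hno
  obtain ⟨e, x, z, he, hex1, hz⟩ := hex (-(c * q))
  rw [sub_neg_eq_add] at hz
  have hne : e ≠ 0 := by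
    intro h0; rw [h0, sub_zero] at hz; exact hno z hz.symm
  have hx0 : e = (-(x * c)) * q := by rw [hex1]; noncomm_ring
  set x₀ : T := -(x * c) with hx₀def
  set x₁ : T := e * x₀ with hx₁
  have he1 : x₁ * q = e := by
    rw [hx₁, mul_assoc, ← hx0, he]
  have hex₁ : e * x₁ = x₁ := by rw [hx₁, ← mul_assoc, he]
  have heq : e * q = 0 := by
    calc e * q = x₁ * q * q := by rw [he1]
    _ = x₁ * (q * q) := mul_assoc _ _ _
    _ = 0 := by rw [hq, mul_zero]
  set f : T := q * x₁ with hf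
  have hff : f * f = f := by
    rw [hf]; simp only [mul_assoc, rea he1, hex₁]
  set a : T := q * e with ha
  have hba : x₁ * a = e := by rw [ha]; simp only [mul_assoc, rea he1, he]
  have hab : a * x₁ = f := by rw [ha, hf]; simp only [mul_assoc, hex₁]
  have hea : e * a = 0 := by rw [ha]; simp only [rea heq, zero_mul]
  have hae : a * e = a := by rw [ha]; simp only [mul_assoc, he]
  have hfa : f * a = a := by rw [hf, ha]; simp only [mul_assoc, rea he1, he]
  have hef : e * f = 0 := by rw [hf]; simp only [rea heq, zero_mul]
  have haa : a * a = 0 := by rw [ha]; simp only [mul_assoc, rea heq, zero_mul, mul_zero]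
  have hbf : x₁ * f = x₁ := by rw [hf]; simp only [rea he1, hex₁]
  set f₁ : T := f - f * e with hf₁
  have hf₁f₁ : f₁ * f₁ = f₁ := by
    rw [hf₁]
    have expand : (f - f * e) * (f - f * e)
        = f * f - f * (e * f) - f * (f * e) + f * (e * (f * e)) := by noncomm_ring
    rw [expand, hef, rea hef, rea hff, hff]
    simp
  have hef₁ : e * f₁ = 0 := by
    rw [hf₁, mul_sub, hef, rea hef, zero_mul, sub_zero]
  have hf₁e : f₁ * e = 0 := by
    have expand : (f - f * e) * e = f * e - f * (e * e) := by noncomm_ring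
    rw [hf₁, expand, he, sub_self]
  have hf₁a : f₁ * a = a := by
    have expand : (f - f * e) * a = f * a - f * (e * a) := by noncomm_ring
    rw [hf₁, expand, hfa, hea, mul_zero, sub_zero]
  have haf : a * f = 0 := by
    rw [ha, hf]; simp only [mul_assoc, rea heq, zero_mul, mul_zero]
  have haf₁ : a * f₁ = 0 := by
    have expand : a * (f - f * e) = a * f - a * f * e := by noncomm_ring
    rw [hf₁, expand, haf, zero_mul, sub_self]
  set b' : T := x₁ - x₁ * e with hb'
  have heb' : e * b' = b' := by
    rw [hb', mul_sub, hex₁, rea hex₁]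
  have hb'e : b' * e = 0 := by
    have expand : (x₁ - x₁ * e) * e = x₁ * e - x₁ * (e * e) := by noncomm_ring
    rw [hb', expand, he, sub_self]
  have hb'f₁ : b' * f₁ = b' := by
    rw [hb', hf₁]
    have expand : (x₁ - x₁ * e) * (f - f * e)
        = x₁ * f - x₁ * (f * e) - x₁ * (e * f) + x₁ * (e * (f * e)) := by noncomm_ring
    rw [expand, hbf, hef, rea hef, rea hbf]
    simp
  have hf₁b' : f₁ * b' = 0 := by
    calc f₁ * b' = f₁ * e * b' := by rw [mul_assoc, heb']
    _ = 0 := by rw [hf₁e, zero_mul]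
  have hab' : a * b' = f₁ := by
    have expand : a * (x₁ - x₁ * e) = a * x₁ - a * x₁ * e := by noncomm_ring
    rw [hb', hf₁, expand, hab]
  have hb'a : b' * a = e := by
    have expand : (x₁ - x₁ * e) * a = x₁ * a - x₁ * (e * a) := by noncomm_ring
    rw [hb', expand, hba, hea, mul_zero, sub_zero]
  have hb'b' : b' * b' = 0 := by
    calc b' * b' = b' * e * b' := by rw [mul_assoc, heb']
    _ = 0 := by rw [hb'e, zero_mul]
  set g : T := e + f₁ with hg
  have hgg : g * g = g := by
    rw [hg]
    have expand : (e + f₁) * (e + f₁) = e * e + e * f₁ + f₁ * e + f₁ * f₁ := by noncomm_ring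
    rw [expand, he, hef₁, hf₁e, hf₁f₁]; abel
  set t : T := a + b' + f₁ with ht
  have htt : t * t = t + g := by
    rw [ht]
    have expand : (a + b' + f₁) * (a + b' + f₁)
        = a * a + a * b' + a * f₁ + (b' * a + b' * b' + b' * f₁)
          + (f₁ * a + f₁ * b' + f₁ * f₁) := by noncomm_ring
    rw [expand, haa, hab', haf₁, hb'a, hb'b', hb'f₁, hf₁a, hf₁b', hf₁f₁, hg]
    abel
  have htg : t * g = t := by
    rw [ht, hg]
    have expand : (a + b' + f₁) * (e + f₁)
        = a * e + a * f₁ + (b' * e + b' * f₁) + (f₁ * e + f₁ * f₁) := by noncomm_ring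
    rw [expand, hae, haf₁, hb'e, hb'f₁, hf₁e, hf₁f₁]
    abel
  have hgt : g * t = t := by
    rw [ht, hg]
    have expand : (e + f₁) * (a + b' + f₁)
        = e * a + e * b' + e * f₁ + (f₁ * a + f₁ * b' + f₁ * f₁) := by noncomm_ring
    rw [expand, hea, heb', hef₁, hf₁a, hf₁b', hf₁f₁]
    abel
  have hu1 : ((1:T) + a) * (1 - a) = 1 := by
    have : ((1:T) + a) * (1 - a) = 1 - a * a := by noncomm_ring
    rw [this, haa, sub_zero]
  have hu1' : ((1:T) - a) * (1 + a) = 1 := by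
    have : ((1:T) - a) * (1 + a) = 1 - a * a := by noncomm_ring
    rw [this, haa, sub_zero]
  have hu2 : ((1:T) + b') * (1 - b') = 1 := by
    have : ((1:T) + b') * (1 - b') = 1 - b' * b' := by noncomm_ring
    rw [this, hb'b', sub_zero]
  have hu2' : ((1:T) - b') * (1 + b') = 1 := by
    have : ((1:T) - b') * (1 + b') = 1 - b' * b' := by noncomm_ring
    rw [this, hb'b', sub_zero]
  have hu : IsUnit ((1:T) + t) := by
    have hprod : ((1:T) + a) * (1 + b') = 1 + t := by
      have : ((1:T) + a) * (1 + b') = 1 + (a + b' + a * b') := by noncomm_ring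
      rw [this, hab', ht]
    rw [← hprod]
    exact IsUnit.mul ⟨⟨1 + a, 1 - a, hu1, hu1'⟩, rfl⟩ ⟨⟨1 + b', 1 - b', hu2, hu2'⟩, rfl⟩
  obtain ⟨n, hn⟩ := hnu _ hu
  have htn : t ^ n = 0 := by
    have : (1:T) + t - 1 = t := by abel
    rwa [this] at hn
  rcases Nat.eq_zero_or_pos n with hn0 | hnpos
  · subst hn0
    have h10 : (1 : T) = 0 := by simpa using htn
    exact hne (by calc e = e * 1 := (mul_one e).symm
      _ = e * 0 := by rw [h10]
      _ = 0 := mul_zero e)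
  · have hcom : t * (t - g) = (t - g) * t := by
      rw [mul_sub, sub_mul, htt, htg, hgt]
    have hgfac : g = t * (t - g) := by
      rw [mul_sub, htt, htg]; abel
    have hgn : g ^ n = 0 := by
      rw [hgfac, Commute.mul_pow hcom, htn, zero_mul]
    have hg0 : g = 0 := by rw [← idem_pow_eq hgg n hnpos, hgn]
    have hge' : g * e = e := by rw [hg, add_mul, he, hf₁e, add_zero]
    exact hne (by rw [← hge', hg0, zero_mul])

lemma boolean_of {T : Type*} [Ring T]
    (hex : ∀ a : T, ∃ e x z : T, e * e = e ∧ e = x * a ∧ 1 - e = z * (1 - a))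
    (hred : ∀ t : T, t * t = 0 → t = 0)
    (htriv : ∀ t : T, IsUnit t → t = 1) :
    ∀ s : T, s * s = s := by
  intro s
  obtain ⟨e, x, z, he, hexs, hz⟩ := hex s
  have h1e : ((1:T) - e) * (1 - e) = 1 - e := by
    have : ((1:T) - e) * (1 - e) = 1 - e - e + e * e := by noncomm_ring
    rw [this, he]; abel
  have h1 : e * s * e = e := idem_eq_of_eq_mul hred htriv he hexs
  have h2 : (1 - e) * (1 - s) * (1 - e) = 1 - e := idem_eq_of_eq_mul hred htriv h1e hz
  have hcen := idem_central hred he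
  have hcen' := idem_central hred h1e
  have hes : e * s = e := by
    calc e * s = e * e * s := by rw [he]
    _ = e * (e * s) := mul_assoc _ _ _
    _ = e * (s * e) := by rw [hcen s]
    _ = e * s * e := (mul_assoc _ _ _).symm
    _ = e := h1
  have hes2 : (1 - e) * (1 - s) = 1 - e := by
    calc (1 - e) * (1 - s) = (1 - e) * (1 - e) * (1 - s) := by rw [h1e]
    _ = (1 - e) * ((1 - e) * (1 - s)) := mul_assoc _ _ _
    _ = (1 - e) * ((1 - s) * (1 - e)) := by rw [hcen' (1 - s)]
    _ = (1 - e) * (1 - s) * (1 - e) := (mul_assoc _ _ _).symm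
    _ = 1 - e := h2
  have hse : s = e := by
    have hexp : ((1:T) - e) * (1 - s) = 1 - s - e + e * s := by noncomm_ring
    rw [hexp, hes] at hes2
    have h3 : (1:T) - s = 1 - e := by rw [← hes2]; abel
    have := congrArg (fun w => (1:T) - w) h3
    simpa using this
  rw [hse, he]

end UJsharpAux

/-- `J#(R)`: the set of elements `z` such that `z ^ n` lies in the Jacobson radical
(the intersection of the maximal left ideals) for some `n ≥ 1`. -/
def Jsharp (R : Type*) [Ring R] : Set R :=
  {z : R | ∃ n : ℕ, 1 ≤ n ∧ z ^ n ∈ Ideal.jacobson (⊥ : Ideal R)}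

/-- A ring is a `UJ#` ring if `u - 1 ∈ J#(R)` for every unit `u`. -/
def IsUJsharp (R : Type*) [Ring R] : Prop :=
  ∀ u : Rˣ, ((u : R) - 1) ∈ Jsharp R

/-- A ring is an exchange ring if for every element `a` there is an idempotent
`e ∈ Ra` with `1 - e ∈ R(1 - a)`. -/
def IsExchange (R : Type*) [Ring R] : Prop :=
  ∀ a : R, ∃ e : R, IsIdempotentElem e ∧ e ∈ Ideal.span {a} ∧ 1 - e ∈ Ideal.span {1 - a}

theorem exchange_isUJsharp_nil_iff_stronglyNilClean (R : Type*) [Ring R] :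
    (IsExchange R ∧ IsUJsharp R ∧ ∀ x ∈ Ideal.jacobson (⊥ : Ideal R), IsNilpotent x) ↔
      (∀ a : R, ∃ e q : R, IsIdempotentElem e ∧ IsNilpotent q ∧ a = e + q ∧ e * q = q * e) := by
  constructor
  · rintro ⟨hEx, hUJ, hJnil⟩
    intro a
    -- the quotient by the Jacobson radical (as a two-sided ideal)
    set I : TwoSidedIdeal R := (⊥ : TwoSidedIdeal R).jacobson with hI
    set S := I.ringCon.Quotient with hS
    set π : R →+* S := I.ringCon.mk' with hπ
    have hmemI : ∀ x : R, x ∈ I ↔ x ∈ Ideal.jacobson (⊥ : Ideal R) := by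
      intro x
      rw [hI, TwoSidedIdeal.mem_jacobson_iff, Ideal.mem_jacobson_iff]
      simp [Ideal.mem_bot]
    have hker : ∀ x : R, π x = 0 ↔ x ∈ Ideal.jacobson (⊥ : Ideal R) := by
      intro x
      rw [← hmemI]
      constructor
      · intro h
        have hx : x ∈ TwoSidedIdeal.ker (I.ringCon.mk') := (TwoSidedIdeal.mem_ker _).2 h
        rwa [TwoSidedIdeal.ker_ringCon_mk'] at hx
      · intro h
        have hx : x ∈ TwoSidedIdeal.ker (I.ringCon.mk') := by
          rw [TwoSidedIdeal.ker_ringCon_mk']; exact h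
        exact (TwoSidedIdeal.mem_ker _).1 hx
    have hsurj : Function.Surjective π := fun y => Quotient.inductionOn' y fun b => ⟨b, rfl⟩
    have hlift : ∀ x : R, IsUnit (π x) → IsUnit x := by
      intro x hx
      obtain ⟨u, hu⟩ := hx
      obtain ⟨y, hy⟩ := hsurj (↑u⁻¹)
      have h1 : π (x * y) = 1 := by rw [map_mul, ← hu, hy, Units.mul_inv]
      have h2 : π (y * x) = 1 := by rw [map_mul, hy, ← hu, Units.inv_mul]
      have hxy : IsUnit (x * y) := by
        have h0 : π (x * y - 1) = 0 := by rw [map_sub, h1, map_one, sub_self]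
        have hmem := (hker _).1 h0
        have hrw : x * y = 1 - (-(x * y - 1)) := by abel
        rw [hrw]
        exact UJsharpAux.isUnit_one_sub_of_mem_jacobson (Submodule.neg_mem _ hmem)
      have hyx : IsUnit (y * x) := by
        have h0 : π (y * x - 1) = 0 := by rw [map_sub, h2, map_one, sub_self]
        have hmem := (hker _).1 h0
        have hrw : y * x = 1 - (-(y * x - 1)) := by abel
        rw [hrw]
        exact UJsharpAux.isUnit_one_sub_of_mem_jacobson (Submodule.neg_mem _ hmem)
      obtain ⟨v, hv⟩ := hxy
      obtain ⟨w, hw⟩ := hyx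
      have hr : x * (y * ↑v⁻¹) = 1 := by rw [← mul_assoc, ← hv, Units.mul_inv]
      have hl : (↑w⁻¹ * y) * x = 1 := by rw [mul_assoc, ← hw, Units.inv_mul]
      have heq : y * ↑v⁻¹ = ↑w⁻¹ * y := by
        calc y * ↑v⁻¹ = 1 * (y * ↑v⁻¹) := (one_mul _).symm
        _ = ((↑w⁻¹ * y) * x) * (y * ↑v⁻¹) := by rw [hl]
        _ = (↑w⁻¹ * y) * (x * (y * ↑v⁻¹)) := by rw [mul_assoc]
        _ = ↑w⁻¹ * y := by rw [hr, mul_one]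
      exact ⟨⟨x, y * ↑v⁻¹, hr, by rw [heq]; exact hl⟩, rfl⟩
    have hexS : ∀ s : S, ∃ e x z : S, e * e = e ∧ e = x * s ∧ 1 - e = z * (1 - s) := by
      intro s
      obtain ⟨b, rfl⟩ := hsurj s
      obtain ⟨e, he, hm1, hm2⟩ := hEx b
      obtain ⟨x, hx⟩ := Submodule.mem_span_singleton.1 hm1
      obtain ⟨z, hz⟩ := Submodule.mem_span_singleton.1 hm2
      rw [smul_eq_mul] at hx hz
      refine ⟨π e, π x, π z, ?_, ?_, ?_⟩
      · rw [← map_mul, he.eq]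
      · rw [← map_mul, hx]
      · have : (1 : S) - π e = π (1 - e) := by rw [map_sub, map_one]
        rw [this, ← hz, map_mul, map_sub, map_one]
    have hnuS : ∀ t : S, IsUnit t → IsNilpotent (t - 1) := by
      intro t ht
      obtain ⟨b, rfl⟩ := hsurj t
      have hb : IsUnit b := hlift b ht
      obtain ⟨u, hu⟩ := hb
      have hUJu := hUJ u
      simp only [Jsharp, Set.mem_setOf_eq] at hUJu
      obtain ⟨n, hn1, hn2⟩ := hUJu
      obtain ⟨m, hm⟩ := hJnil _ hn2
      have hk : (b - 1) ^ (n * m) = 0 := by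
        rw [pow_mul, ← hu, hm]
      refine ⟨n * m, ?_⟩
      have hrw : (π b - 1 : S) = π (b - 1) := by rw [map_sub, map_one]
      rw [hrw, ← map_pow, hk, map_zero]
    have hredS : ∀ t : S, t * t = 0 → t = 0 := by
      intro t ht
      by_contra htne
      obtain ⟨b, hbt⟩ := hsurj t
      have hbJ : b ∉ Ideal.jacobson (⊥ : Ideal R) := fun h => htne (by rw [← hbt]; exact (hker b).2 h)
      have hnall : ¬ ∀ y, ∃ z, z * y * b + z - 1 ∈ (⊥ : Ideal R) :=
        fun h => hbJ (Ideal.mem_jacobson_iff.2 h)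
      push_neg at hnall
      obtain ⟨y, hy⟩ := hnall
      have hnoS : ∀ zs : S, zs * (1 + π y * t) ≠ 1 := by
        intro zs hzs
        obtain ⟨z0, rfl⟩ := hsurj zs
        have hmem : z0 * (1 + y * b) - 1 ∈ Ideal.jacobson (⊥ : Ideal R) := by
          apply (hker _).1
          rw [map_sub, map_one, map_mul, map_add, map_one, map_mul, hbt, hzs, sub_self]
        have hd : IsUnit (z0 * (1 + y * b)) := by
          have hrw : z0 * (1 + y * b) = 1 - (-(z0 * (1 + y * b) - 1)) := by abel
          rw [hrw]
          exact UJsharpAux.isUnit_one_sub_of_mem_jacobson (Submodule.neg_mem _ hmem)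
        obtain ⟨v, hv⟩ := hd
        have hleft : (↑v⁻¹ * z0) * (1 + y * b) = 1 := by
          rw [mul_assoc, ← hv, Units.inv_mul]
        have hcontr : (↑v⁻¹ * z0 : R) * y * b + (↑v⁻¹ * z0) - 1 = 0 := by
          have expand : (↑v⁻¹ * z0 : R) * y * b + (↑v⁻¹ * z0) - 1
              = (↑v⁻¹ * z0) * (1 + y * b) - 1 := by noncomm_ring
          rw [expand, hleft, sub_self]
        exact hy _ ((Submodule.mem_bot R).2 hcontr)
      obtain ⟨zs, hzs⟩ := UJsharpAux.sq_zero_left_inv hexS hnuS t (π y) ht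
      exact hnoS zs hzs
    have htrivS : ∀ t : S, IsUnit t → t = 1 := by
      intro t ht
      have h0 := UJsharpAux.nilpotent_eq_zero hredS _ (hnuS t ht)
      rwa [sub_eq_zero] at h0
    have hboolS := UJsharpAux.boolean_of hexS hredS htrivS
    have haJ : a - a ^ 2 ∈ Ideal.jacobson (⊥ : Ideal R) := by
      apply (hker _).1
      rw [map_sub, map_pow, pow_two, hboolS (π a), sub_self]
    obtain ⟨e, q, h1, _, _, h4, h5, h6⟩ := UJsharpAux.key_split a (hJnil _ haJ)
    exact ⟨e, q, h1, h4, h5, h6⟩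
  · intro hSNC
    have hsq : ∀ b : R, IsNilpotent (b - b ^ 2) := by
      intro b
      obtain ⟨e, q, he, hq, hbe, hcomm⟩ := hSNC b
      have hexp : b - b ^ 2 = q * (1 - e - e - q) := by
        rw [hbe]
        calc (e + q) - (e + q) ^ 2 = (e - e * e) + q - e * q - q * e - q * q := by noncomm_ring
        _ = q - q * e - q * e - q * q := by rw [he.eq, sub_self, zero_add, hcomm]
        _ = q * (1 - e - e - q) := by noncomm_ring
      rw [hexp]
      have hcm : Commute q (1 - e - e - q) := by
        show q * (1 - e - e - q) = (1 - e - e - q) * q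
        have h1 : q * (1 - e - e - q) = q - q * e - q * e - q * q := by noncomm_ring
        have h2 : (1 - e - e - q) * q = q - e * q - e * q - q * q := by noncomm_ring
        rw [h1, h2, hcomm]
      exact Commute.isNilpotent_mul_right hcm hq
    refine ⟨?_, ?_, ?_⟩
    · intro b
      obtain ⟨e, q, h1, h2, h3, _, _, _⟩ := UJsharpAux.key_split b (hsq b)
      exact ⟨e, h1, h2, h3⟩
    · intro u
      obtain ⟨e, q, he, hq, hueq, hcomm⟩ := hSNC (u : R)
      have hqu : Commute q (u : R) := by
        show q * (u : R) = (u : R) * q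
        rw [hueq, mul_add, add_mul, hcomm]
      have hqui : Commute ((u⁻¹ : Rˣ) : R) q := (hqu.units_inv_right).symm
      have hnilinv : IsNilpotent (((u⁻¹ : Rˣ) : R) * q) :=
        Commute.isNilpotent_mul_left hqui hq
      have hunit_e : IsUnit e := by
        have hsub : e = (u : R) - q := by rw [hueq]; abel
        have hfac : e = (u : R) * (1 - ((u⁻¹ : Rˣ) : R) * q) := by
          rw [hsub, mul_sub, mul_one, ← mul_assoc, Units.mul_inv, one_mul]
        rw [hfac]
        exact u.isUnit.mul (IsNilpotent.isUnit_one_sub hnilinv)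
      have he1 : e = 1 := by
        obtain ⟨v, hv⟩ := hunit_e
        calc e = (↑v⁻¹ * ↑v) * e := by rw [Units.inv_mul, one_mul]
        _ = ↑v⁻¹ * (e * e) := by rw [hv, mul_assoc]
        _ = ↑v⁻¹ * e := by rw [he.eq]
        _ = ↑v⁻¹ * ↑v := by rw [hv]
        _ = 1 := Units.inv_mul v
      have hq' : (u : R) - 1 = q := by rw [hueq, he1]; abel
      obtain ⟨m, hm⟩ := hq
      simp only [Jsharp, Set.mem_setOf_eq]
      refine ⟨m + 1, by omega, ?_⟩
      rw [hq', pow_succ, hm, zero_mul]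
      exact Submodule.zero_mem _
    · intro x hx
      obtain ⟨e, q, h1, h2, _, h4, h5, _⟩ := UJsharpAux.key_split x (hsq x)
      have heJ : e ∈ Ideal.jacobson (⊥ : Ideal R) := by
        have hle : Ideal.span {x} ≤ Ideal.jacobson (⊥ : Ideal R) :=
          (Ideal.span_le).2 (Set.singleton_subset_iff.2 hx)
        exact hle h2
      have he0 : e = 0 := by
        obtain ⟨v, hv⟩ := UJsharpAux.isUnit_one_sub_of_mem_jacobson heJ
        calc e = (↑v⁻¹ * ↑v) * e := by rw [Units.inv_mul, one_mul]
        _ = ↑v⁻¹ * ((1 - e) * e) := by rw [hv, mul_assoc]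
        _ = ↑v⁻¹ * (e - e * e) := by rw [sub_mul, one_mul]
        _ = 0 := by rw [h1.eq, sub_self, mul_zero]
      rw [h5, he0, zero_add]
      exact h4
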